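/- Let p be a probability distribution on a finite set [k] and for each x let N_x ~ Bin(N, p(x)). Then the quantity Σ_x p(x)·E[log((N_x+1)/(N·p(x)))] satisfies −Σ_x p(x)·log((N+1)/N) ≤ Σ_x p(x)·E[log((N_x+1)/(N·p(x)))] ≤ k/N. In particular |E[H̄] − H(p)| ≤ k/N, where E[H̄] = Σ_x p(x)·E[log(N/(N_x+1))]. -/

import Mathlib

open Finset

/-- pmf of Bin(m,r) at i -/
noncomputable def binomPMF (m : ℕ) (r : ℝ) (i : ℕ) : ℝ :=
  (m.choose i : ℝ) * r ^ i * (1 - r) ^ (m - i)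

/-- expectation of f(X) for X ~ Bin(m,r) -/
noncomputable def binomExp (m : ℕ) (r : ℝ) (f : ℕ → ℝ) : ℝ :=
  ∑ i ∈ Finset.range (m + 1), binomPMF m r i * f i

lemma pmf_nonneg {m : ℕ} {r : ℝ} (h0 : 0 ≤ r) (h1 : r ≤ 1) (i : ℕ) :
    0 ≤ binomPMF m r i := by
  unfold binomPMF
  have : (0:ℝ) ≤ 1 - r := by linarith
  positivity

lemma pmf_sum (m : ℕ) (r : ℝ) : ∑ i ∈ Finset.range (m + 1), binomPMF m r i = 1 := by
  have h := add_pow r (1 - r) m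
  simp only [add_sub_cancel, one_pow] at h
  exact (Finset.sum_congr rfl (fun i _ => by unfold binomPMF; ring)).trans h.symm

lemma pmf_mean (m : ℕ) (r : ℝ) :
    ∑ i ∈ Finset.range (m + 1), binomPMF m r i * i = m * r := by
  cases m with
  | zero => simp [binomPMF]
  | succ n =>
    rw [Finset.sum_range_succ']
    have h0 : binomPMF (n+1) r 0 * ((0:ℕ):ℝ) = 0 := by simp
    rw [h0, add_zero]
    have key : ∀ i ∈ Finset.range (n+1),
        binomPMF (n+1) r (i+1) * (((i+1 : ℕ)):ℝ) = ((n:ℝ)+1) * r * binomPMF n r i := by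
      intro i hi
      unfold binomPMF
      have hc : ((n+1).choose (i+1) : ℝ) * ((i:ℝ)+1) = ((n:ℝ)+1) * (n.choose i : ℝ) := by
        have h := Nat.add_one_mul_choose_eq n i
        have h2 : ((Nat.succ n * n.choose i : ℕ) : ℝ) = (((n+1).choose (i+1) * Nat.succ i : ℕ) : ℝ) :=
          congrArg Nat.cast h
        push_cast at h2
        linarith
      have hsub : n + 1 - (i + 1) = n - i := by omega
      rw [hsub]
      push_cast
      linear_combination r ^ (i+1) * (1-r) ^ (n-i) * hc
    rw [Finset.sum_congr rfl key, ← Finset.mul_sum, pmf_sum n r, mul_one]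
    push_cast; ring

lemma pmf_inv_sum {m : ℕ} {r : ℝ} (h0 : 0 < r) (h1 : r ≤ 1) :
    ∑ i ∈ Finset.range (m + 1), binomPMF m r i * (1 / ((i:ℝ)+1)) ≤ 1 / (((m:ℝ)+1) * r) := by
  have key : ∀ i ∈ Finset.range (m+1),
      binomPMF m r i * (1 / ((i:ℝ)+1)) = binomPMF (m+1) r (i+1) / (((m:ℝ)+1) * r) := by
    intro i hi
    unfold binomPMF
    have hc : ((m:ℝ)+1) * (m.choose i : ℝ) = ((m+1).choose (i+1) : ℝ) * ((i:ℝ)+1) := by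
      have h := Nat.add_one_mul_choose_eq m i
      exact_mod_cast congrArg (Nat.cast (R := ℝ)) h
    have hsub : m + 1 - (i + 1) = m - i := by omega
    rw [hsub]
    have hi1 : ((i:ℝ)+1) ≠ 0 := by positivity
    have hm1 : ((m:ℝ)+1) * r ≠ 0 := by positivity
    field_simp
    linear_combination r ^ (i+1) * (1-r) ^ (m-i) * hc
  rw [Finset.sum_congr rfl key, ← Finset.sum_div]
  have hS : ∑ i ∈ Finset.range (m+1), binomPMF (m+1) r (i+1) ≤ 1 := by
    have hs := pmf_sum (m+1) r
    rw [Finset.sum_range_succ'] at hs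
    have := pmf_nonneg h0.le h1 (m := m+1) 0
    linarith
  gcongr

lemma log_ge_one_sub_inv {x : ℝ} (hx : 0 < x) : 1 - 1/x ≤ Real.log x := by
  have h := Real.log_le_sub_one_of_pos (x := 1/x) (by positivity)
  rw [one_div, Real.log_inv] at h
  rw [one_div]
  linarith

lemma exp_upper (N : ℕ) (hN : 0 < N) {r : ℝ} (h0 : 0 < r) (h1 : r ≤ 1) :
    binomExp N r (fun i => Real.log (((i:ℝ)+1)/((N:ℝ)*r))) ≤ 1/((N:ℝ)*r) := by
  have hNr : (0:ℝ) < (N:ℝ)*r := by positivity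
  have step : ∀ i ∈ Finset.range (N+1),
      binomPMF N r i * Real.log (((i:ℝ)+1)/((N:ℝ)*r)) ≤
      binomPMF N r i * (((i:ℝ)+1)/((N:ℝ)*r) - 1) := by
    intro i _
    have := Real.log_le_sub_one_of_pos (x := ((i:ℝ)+1)/((N:ℝ)*r)) (by positivity)
    exact mul_le_mul_of_nonneg_left this (pmf_nonneg h0.le h1 i)
  calc binomExp N r (fun i => Real.log (((i:ℝ)+1)/((N:ℝ)*r)))
      ≤ ∑ i ∈ Finset.range (N+1), binomPMF N r i * (((i:ℝ)+1)/((N:ℝ)*r) - 1) :=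
        Finset.sum_le_sum step
    _ = (1/((N:ℝ)*r)) * ((∑ i ∈ Finset.range (N+1), binomPMF N r i * i)
          + ∑ i ∈ Finset.range (N+1), binomPMF N r i)
          - ∑ i ∈ Finset.range (N+1), binomPMF N r i := by
        rw [← Finset.sum_add_distrib, Finset.mul_sum, ← Finset.sum_sub_distrib]
        apply Finset.sum_congr rfl
        intro i _
        field_simp
    _ = 1/((N:ℝ)*r) := by
        rw [pmf_mean, pmf_sum]
        field_simp
        ring

lemma exp_lower (N : ℕ) (hN : 0 < N) {r : ℝ} (h0 : 0 < r) (h1 : r ≤ 1) :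
    0 ≤ binomExp N r (fun i => Real.log (((i:ℝ)+1)/((N:ℝ)*r))) := by
  have hNr : (0:ℝ) < (N:ℝ)*r := by positivity
  have step : ∀ i ∈ Finset.range (N+1),
      binomPMF N r i * (1 - ((N:ℝ)*r) * (1/((i:ℝ)+1))) ≤
      binomPMF N r i * Real.log (((i:ℝ)+1)/((N:ℝ)*r)) := by
    intro i _
    have hx : (0:ℝ) < ((i:ℝ)+1)/((N:ℝ)*r) := by positivity
    have hlog := log_ge_one_sub_inv hx
    have hrw : 1/(((i:ℝ)+1)/((N:ℝ)*r)) = ((N:ℝ)*r) * (1/((i:ℝ)+1)) := by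
      field_simp
    rw [hrw] at hlog
    exact mul_le_mul_of_nonneg_left hlog (pmf_nonneg h0.le h1 i)
  have hTle := pmf_inv_sum (m := N) h0 h1
  have hmain : (∑ i ∈ Finset.range (N+1), binomPMF N r i)
        - ((N:ℝ)*r) * ∑ i ∈ Finset.range (N+1), binomPMF N r i * (1/((i:ℝ)+1))
      ≤ binomExp N r (fun i => Real.log (((i:ℝ)+1)/((N:ℝ)*r))) := by
    refine le_trans (le_of_eq ?_) (Finset.sum_le_sum step)
    rw [Finset.mul_sum, ← Finset.sum_sub_distrib]
    apply Finset.sum_congr rfl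
    intro i _
    ring
  rw [pmf_sum] at hmain
  have h2 : ((N:ℝ)*r) * (1/(((N:ℝ)+1)*r)) = (N:ℝ)/((N:ℝ)+1) := by
    field_simp
  have h3 : ((N:ℝ)*r) * ∑ i ∈ Finset.range (N+1), binomPMF N r i * (1/((i:ℝ)+1))
      ≤ (N:ℝ)/((N:ℝ)+1) := by
    rw [← h2]
    exact mul_le_mul_of_nonneg_left hTle hNr.le
  have h4 : (N:ℝ)/((N:ℝ)+1) ≤ 1 := by
    rw [div_le_one (by positivity)]; linarith
  linarith

theorem bias_bound_simple (k N : ℕ) (hN : 0 < N) (p : Fin k → ℝ)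
    (hpos : ∀ x, 0 < p x) (hsum : ∑ x, p x = 1) :
    (-∑ x, p x * Real.log (((N : ℝ) + 1) / N) ≤
        ∑ x, p x * binomExp N (p x) (fun i => Real.log (((i : ℝ) + 1) / ((N : ℝ) * p x)))) ∧
    (∑ x, p x * binomExp N (p x) (fun i => Real.log (((i : ℝ) + 1) / ((N : ℝ) * p x))) ≤
        (k : ℝ) / N) ∧
    |(∑ x, p x * binomExp N (p x) (fun i => Real.log ((N : ℝ) / ((i : ℝ) + 1)))) -
        (-∑ x, p x * Real.log (p x))| ≤ (k : ℝ) / N := by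
  have hNpos : (0:ℝ) < N := by exact_mod_cast hN
  have hple : ∀ x, p x ≤ 1 := by
    intro x
    calc p x ≤ ∑ y, p y := Finset.single_le_sum (fun y _ => (hpos y).le) (Finset.mem_univ x)
      _ = 1 := hsum
  -- S ≥ 0
  have hS0 : 0 ≤ ∑ x, p x * binomExp N (p x) (fun i => Real.log (((i:ℝ)+1)/((N:ℝ)*p x))) := by
    apply Finset.sum_nonneg
    intro x _
    exact mul_nonneg (hpos x).le (exp_lower N hN (hpos x) (hple x))
  -- S ≤ k/N
  have hSk : ∑ x, p x * binomExp N (p x) (fun i => Real.log (((i:ℝ)+1)/((N:ℝ)*p x))) ≤ (k:ℝ)/N := by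
    calc ∑ x, p x * binomExp N (p x) (fun i => Real.log (((i:ℝ)+1)/((N:ℝ)*p x)))
        ≤ ∑ x : Fin k, (1:ℝ)/N := by
          apply Finset.sum_le_sum
          intro x _
          have := exp_upper N hN (hpos x) (hple x)
          have h2 : p x * binomExp N (p x) (fun i => Real.log (((i:ℝ)+1)/((N:ℝ)*p x)))
              ≤ p x * (1/((N:ℝ)*p x)) := mul_le_mul_of_nonneg_left this (hpos x).le
          have h3 : p x * (1/((N:ℝ)*p x)) = 1/(N:ℝ) := by
            rw [mul_one_div, mul_comm (N:ℝ) (p x), ← div_div, div_self (hpos x).ne']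
          linarith
      _ = (k:ℝ)/N := by
          rw [Finset.sum_const, Finset.card_univ, Fintype.card_fin, nsmul_eq_mul]
          ring
  refine ⟨?_, hSk, ?_⟩
  · have hlog : 0 ≤ Real.log (((N:ℝ)+1)/N) := by
      apply Real.log_nonneg
      rw [le_div_iff₀ hNpos]; linarith
    have : 0 ≤ ∑ x, p x * Real.log (((N:ℝ)+1)/N) :=
      Finset.sum_nonneg (fun x _ => mul_nonneg (hpos x).le hlog)
    linarith
  · -- rewrite third expression as -S
    have hrw : ∀ x : Fin k,
        binomExp N (p x) (fun i => Real.log ((N:ℝ)/((i:ℝ)+1)))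
          = -binomExp N (p x) (fun i => Real.log (((i:ℝ)+1)/((N:ℝ)*p x))) - Real.log (p x) := by
      intro x
      unfold binomExp
      have hpt : ∀ i ∈ Finset.range (N+1),
          binomPMF N (p x) i * Real.log ((N:ℝ)/((i:ℝ)+1))
          = -(binomPMF N (p x) i * Real.log (((i:ℝ)+1)/((N:ℝ)*p x)))
            - binomPMF N (p x) i * Real.log (p x) := by
        intro i _
        have h1 : Real.log ((N:ℝ)/((i:ℝ)+1)) = Real.log (N:ℝ) - Real.log ((i:ℝ)+1) :=
          Real.log_div (by positivity) (by positivity)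
        have h2 : Real.log (((i:ℝ)+1)/((N:ℝ)*p x))
            = Real.log ((i:ℝ)+1) - (Real.log (N:ℝ) + Real.log (p x)) := by
          rw [Real.log_div (by positivity) (mul_pos hNpos (hpos x)).ne',
            Real.log_mul hNpos.ne' (hpos x).ne']
        rw [h1, h2]; ring
      rw [Finset.sum_congr rfl hpt, Finset.sum_sub_distrib, Finset.sum_neg_distrib,
        ← Finset.sum_mul, pmf_sum, one_mul]
    have hexpr : (∑ x, p x * binomExp N (p x) (fun i => Real.log ((N:ℝ)/((i:ℝ)+1))))
        - (-∑ x, p x * Real.log (p x))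
        = -(∑ x, p x * binomExp N (p x) (fun i => Real.log (((i:ℝ)+1)/((N:ℝ)*p x)))) := by
      rw [Finset.sum_congr rfl (fun x _ => by rw [hrw x])]
      rw [show ∀ a b : ℝ, a - (-b) = a + b from fun a b => by ring]
      rw [← Finset.sum_add_distrib, ← Finset.sum_neg_distrib]
      apply Finset.sum_congr rfl
      intro x _
      ring
    rw [hexpr, abs_neg, abs_of_nonneg hS0]
    exact hSk
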